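/- Take the observation operator to be the identity, Q[u] = u restricted to Γ, and let 1 < p < ∞. Suppose u⁰ ∈ 𝒜 satisfies ‖q^δ − u⁰‖_{L^∞(Γ,H^γ)} ≤ δ, and u_p ∈ 𝒜 is a global minimiser over 𝒜 of E_p(v) := ‖v − q^δ‖_{L^p(Γ,H^γ)} + α‖L[v]‖_{L^p(Ω)} (normalized L^p norms). Then the linear rate of convergence ‖u_p − u⁰‖_{L^p(Γ,H^γ)} ≤ 2δ + α‖L[u⁰]‖_{L^p(Ω)} holds. -/

import Mathlib

open MeasureTheory Filter Metric
open scoped ENNReal Topology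

noncomputable section

/-- `n`-dimensional Euclidean space. -/
abbrev Euc (n : ℕ) := EuclideanSpace ℝ (Fin n)

/-- The `L^∞` norm (essential supremum of the absolute value) of a real function
with respect to a measure, valued in `ℝ≥0∞`. -/
def eNormInf {α : Type*} [MeasurableSpace α] (μ : Measure α) (f : α → ℝ) : ℝ≥0∞ :=
  essSup (fun x => ENNReal.ofReal |f x|) μ

/-- The normalised `L^p` norm `((1/μ(univ)) ∫ |f|^p dμ)^(1/p)` of a real function
with respect to a measure, valued in `ℝ≥0∞`. -/
def eNormP {α : Type*} [MeasurableSpace α] (p : ℝ) (μ : Measure α) (f : α → ℝ) : ℝ≥0∞ :=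
  ((μ Set.univ)⁻¹ * ∫⁻ x, (ENNReal.ofReal |f x|) ^ p ∂μ) ^ (1 / p)

/-- The second-order non-divergence operator `L[u] = A : D²u + b · Du + c u`. -/
def Lop {n : ℕ} (A : Euc n → Matrix (Fin n) (Fin n) ℝ) (b : Euc n → Euc n)
    (c : Euc n → ℝ) (u : Euc n → ℝ) (x : Euc n) : ℝ :=
  (∑ i : Fin n, ∑ j : Fin n, A x i j *
      fderiv ℝ (fun y => fderiv ℝ u y (EuclideanSpace.single j (1:ℝ))) x
        (EuclideanSpace.single i (1:ℝ)))
    + (∑ i : Fin n, b x i * fderiv ℝ u x (EuclideanSpace.single i (1:ℝ)))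
    + c x * u x

/-- **Linear rate of convergence, $L^p$ case, identity observation operator.**
If `1 < p < ∞`, `u⁰ ∈ 𝒜` satisfies `‖q^δ − u⁰‖_{L^∞(Γ,H^γ)} ≤ δ` and `u_p ∈ 𝒜` is a global
minimiser over `𝒜` of `E_p(v) = ‖v − q^δ‖_{L^p(Γ,H^γ)} + α ‖L[v]‖_{L^p(Ω)}` (normalised `L^p`
norms), then `‖u_p − u⁰‖_{L^p(Γ,H^γ)} ≤ 2δ + α ‖L[u⁰]‖_{L^p(Ω)}`. -/
theorem lp_linear_rate_identity_observation
    {n : ℕ}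
    -- the domain Ω : a bounded open subset of ℝⁿ
    (Ω : Set (Euc n)) (hΩo : IsOpen Ω) (hΩb : Bornology.IsBounded Ω)
    -- the dimension γ ∈ [0,n] and the compact measurement set Γ ⊆ Ω̄
    (γ : ℝ) (hγ0 : 0 ≤ γ) (hγn : γ ≤ (n : ℝ))
    (Γ : Set (Euc n)) (hΓc : IsCompact Γ) (hΓΩ : Γ ⊆ closure Ω)
    (hΓ0 : 0 < μH[γ] Γ) (hΓfin : μH[γ] Γ < ⊤)
    -- the coefficients of L : bounded, continuous, A symmetric-matrix valued
    (A : Euc n → Matrix (Fin n) (Fin n) ℝ)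
    (hAsymm : ∀ x ∈ Ω, (A x).IsSymm)
    (hAcont : ∀ i j, ContinuousOn (fun x => A x i j) Ω)
    (hAbd : ∃ C : ℝ, ∀ x ∈ Ω, ∀ i j, |A x i j| ≤ C)
    (b : Euc n → Euc n) (hbcont : ContinuousOn b Ω) (hbbd : ∃ C : ℝ, ∀ x ∈ Ω, ‖b x‖ ≤ C)
    (c : Euc n → ℝ) (hccont : ContinuousOn c Ω) (hcbd : ∃ C : ℝ, ∀ x ∈ Ω, |c x| ≤ C)
    -- the admissible class 𝒜 : C¹ on Ω̄ and twice differentiable in Ω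
    (𝒜 : Set (Euc n → ℝ))
    (h𝒜 : ∀ u ∈ 𝒜, ContDiffOn ℝ 1 u (closure Ω) ∧ DifferentiableOn ℝ u Ω ∧
      DifferentiableOn ℝ (fderiv ℝ u) Ω)
    -- the exponent 1 < p < ∞
    (p : ℝ) (hp : 1 < p)
    -- regularisation parameter, noise level, noisy measurements q^δ ∈ L^∞(Γ,H^γ)
    (α δ : ℝ) (hα : 0 < α) (hδ : 0 < δ)
    (qδ : Euc n → ℝ) (hqδ : eNormInf (μH[γ].restrict Γ) qδ < ⊤)
    -- exact solution u⁰ matching the noisy data up to level δ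
    (u0 : Euc n → ℝ) (hu0 : u0 ∈ 𝒜)
    (hnoise : eNormInf (μH[γ].restrict Γ) (fun x => qδ x - u0 x) ≤ ENNReal.ofReal δ)
    -- u_p : a global minimiser of E_p over 𝒜 (identity observation operator)
    (up : Euc n → ℝ) (hup : up ∈ 𝒜)
    (hmin : ∀ v ∈ 𝒜,
      eNormP p (μH[γ].restrict Γ) (fun x => up x - qδ x)
          + ENNReal.ofReal α * eNormP p (volume.restrict Ω) (Lop A b c up)
        ≤ eNormP p (μH[γ].restrict Γ) (fun x => v x - qδ x)
          + ENNReal.ofReal α * eNormP p (volume.restrict Ω) (Lop A b c v)) :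
    eNormP p (μH[γ].restrict Γ) (fun x => up x - u0 x)
      ≤ ENNReal.ofReal (2 * δ)
        + ENNReal.ofReal α * eNormP p (volume.restrict Ω) (Lop A b c u0) := by
  set ν : Measure (Euc n) := μH[γ].restrict Γ with hν
  have hp0 : (0:ℝ) < p := lt_trans one_pos hp
  have hip : (0:ℝ) ≤ 1 / p := by positivity
  have hT : ν Set.univ = μH[γ] Γ := by
    simp [hν, Measure.restrict_apply_univ]
  have hT0 : ν Set.univ ≠ 0 := by rw [hT]; exact hΓ0.ne'
  have hTtop : ν Set.univ ≠ ⊤ := by rw [hT]; exact hΓfin.ne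
  -- abbreviation for the normalised functional on ℝ≥0∞-valued functions
  set J : (Euc n → ℝ≥0∞) → ℝ≥0∞ :=
    fun f => ((ν Set.univ)⁻¹ * ∫⁻ x, (f x) ^ p ∂ν) ^ (1 / p) with hJ
  -- monotonicity of J
  have Jmono : ∀ f g : Euc n → ℝ≥0∞, (∀ᵐ x ∂ν, f x ≤ g x) → J f ≤ J g := by
    intro f g h
    refine ENNReal.rpow_le_rpow (mul_le_mul_right ?_ _) hip
    exact lintegral_mono_ae (h.mono fun x hx => ENNReal.rpow_le_rpow hx hp0.le)
  -- value of J on constants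
  have Jconst : ∀ r : ℝ, 0 ≤ r → J (fun _ => ENNReal.ofReal r) = ENNReal.ofReal r := by
    intro r hr
    have : (ν Set.univ)⁻¹ * ∫⁻ _, (ENNReal.ofReal r) ^ p ∂ν = (ENNReal.ofReal r) ^ p := by
      rw [lintegral_const, ← mul_assoc, mul_comm (ν Set.univ)⁻¹,
        mul_assoc, ENNReal.inv_mul_cancel hT0 hTtop, mul_one]
    rw [hJ]
    simp only [this]
    rw [← ENNReal.rpow_mul, mul_one_div, div_self hp0.ne', ENNReal.rpow_one]
  -- Minkowski inequality for J
  have Jadd : ∀ f g : Euc n → ℝ≥0∞, AEMeasurable f ν → AEMeasurable g ν →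
      J (fun x => f x + g x) ≤ J f + J g := by
    intro f g hf hg
    rw [hJ]
    simp only [ENNReal.mul_rpow_of_nonneg _ _ hip]
    rw [← mul_add]
    exact mul_le_mul_right (ENNReal.lintegral_Lp_add_le hf hg hp.le) _
  -- continuity of up and u0 on Γ, hence measurability
  have hΓm : MeasurableSet Γ := hΓc.measurableSet
  have hupc : ContinuousOn up Γ :=
    ((h𝒜 up hup).1.continuousOn).mono hΓΩ
  have hu0c : ContinuousOn u0 Γ :=
    ((h𝒜 u0 hu0).1.continuousOn).mono hΓΩ
  have hF : AEMeasurable (fun x => ENNReal.ofReal |up x - u0 x|) ν := by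
    exact ENNReal.measurable_ofReal.comp_aemeasurable
      (continuous_abs.measurable.comp_aemeasurable
        ((hupc.aemeasurable hΓm).sub (hu0c.aemeasurable hΓm)))
  -- the noise bound, pointwise a.e.
  have ae1 : ∀ᵐ x ∂ν, ENNReal.ofReal |qδ x - u0 x| ≤ ENNReal.ofReal δ :=
    (ae_le_essSup (μ := ν) (f := fun x => ENNReal.ofReal |qδ x - u0 x|)).mono fun x hx =>
      le_trans hx hnoise
  -- pointwise triangle bound : |up - u0| ≤ |up - qδ| + δ  a.e.
  have ae2 : ∀ᵐ x ∂ν, ENNReal.ofReal |up x - u0 x|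
      ≤ ENNReal.ofReal |up x - qδ x| + ENNReal.ofReal δ := by
    refine ae1.mono fun x hx => ?_
    calc ENNReal.ofReal |up x - u0 x|
        ≤ ENNReal.ofReal (|up x - qδ x| + |qδ x - u0 x|) := by
          apply ENNReal.ofReal_le_ofReal
          have : up x - u0 x = (up x - qδ x) + (qδ x - u0 x) := by ring
          rw [this]; exact abs_add_le _ _
      _ = ENNReal.ofReal |up x - qδ x| + ENNReal.ofReal |qδ x - u0 x| :=
          ENNReal.ofReal_add (abs_nonneg _) (abs_nonneg _)
      _ ≤ ENNReal.ofReal |up x - qδ x| + ENNReal.ofReal δ := add_le_add_right hx _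
  set F : Euc n → ℝ≥0∞ := fun x => ENNReal.ofReal |up x - u0 x| with hFdef
  set G : Euc n → ℝ≥0∞ := fun x => ENNReal.ofReal |up x - qδ x| with hGdef
  set D : ℝ≥0∞ := ENNReal.ofReal δ with hDdef
  -- step 1 : J F ≤ J G + D   (truncated-subtraction trick avoids measurability of qδ)
  have step1 : J F ≤ J G + D := by
    have h1 : J F ≤ J (fun x => (F x - D) + D) :=
      Jmono _ _ (Filter.Eventually.of_forall fun x => le_tsub_add)
    have h2 : J (fun x => (F x - D) + D) ≤ J (fun x => F x - D) + J (fun _ => D) :=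
      Jadd _ _ (hF.sub aemeasurable_const) aemeasurable_const
    have h3 : J (fun x => F x - D) ≤ J G :=
      Jmono _ _ (ae2.mono fun x hx => tsub_le_iff_right.mpr hx)
    have h4 : J (fun _ => D) = D := Jconst δ hδ.le
    calc J F ≤ J (fun x => (F x - D) + D) := h1
      _ ≤ J (fun x => F x - D) + J (fun _ => D) := h2
      _ ≤ J G + D := by rw [h4]; exact add_le_add_left h3 _
  -- step 2 : J G ≤ D + α‖L u0‖  from minimality
  have hdata : eNormP p ν (fun x => u0 x - qδ x) ≤ D := by
    have hae : ∀ᵐ x ∂ν, ENNReal.ofReal |u0 x - qδ x| ≤ ENNReal.ofReal δ := by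
      refine ae1.mono fun x hx => ?_
      rwa [abs_sub_comm]
    calc eNormP p ν (fun x => u0 x - qδ x)
        = J (fun x => ENNReal.ofReal |u0 x - qδ x|) := rfl
      _ ≤ J (fun _ => ENNReal.ofReal δ) := Jmono _ _ hae
      _ = D := Jconst δ hδ.le
  have step2 : J G ≤ D + ENNReal.ofReal α * eNormP p (volume.restrict Ω) (Lop A b c u0) := by
    have h5 := hmin u0 hu0
    calc J G = eNormP p ν (fun x => up x - qδ x) := rfl
      _ ≤ eNormP p ν (fun x => up x - qδ x)
            + ENNReal.ofReal α * eNormP p (volume.restrict Ω) (Lop A b c up) :=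
          le_add_right le_rfl
      _ ≤ eNormP p ν (fun x => u0 x - qδ x)
            + ENNReal.ofReal α * eNormP p (volume.restrict Ω) (Lop A b c u0) := h5
      _ ≤ D + ENNReal.ofReal α * eNormP p (volume.restrict Ω) (Lop A b c u0) :=
          add_le_add_left hdata _
  -- conclusion
  have h2δ : ENNReal.ofReal (2 * δ) = D + D := by
    rw [hDdef, ← ENNReal.ofReal_add hδ.le hδ.le]; ring_nf
  calc eNormP p ν (fun x => up x - u0 x) = J F := rfl
    _ ≤ J G + D := step1
    _ ≤ (D + ENNReal.ofReal α * eNormP p (volume.restrict Ω) (Lop A b c u0)) + D :=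
        add_le_add_left step2 _
    _ = ENNReal.ofReal (2 * δ)
        + ENNReal.ofReal α * eNormP p (volume.restrict Ω) (Lop A b c u0) := by
        rw [h2δ]; ring

end
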